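/- For any bridgeless cubic graph G and any integer t ≥ 0: there exist t 2-factors F̄_1,...,F̄_t of G such that G + F̄_1 + ... + F̄_t is Class I (i.e. (2t+3)-edge-colourable) if and only if the multigraph (t+1)G, obtained by replacing each edge of G by t+1 parallel edges, is Class I (i.e. (3t+3)-edge-colourable). -/

import Mathlib

open Finset
open scoped Classical

/-- A perfect matching of `G`, given as a finite set of edges: every vertex lies on
exactly one edge of `M`. -/
def IsPM {V : Type*} (G : SimpleGraph V) (M : Finset (Sym2 V)) : Prop :=
  (∀ e ∈ M, e ∈ G.edgeSet) ∧ ∀ v : V, (M.filter (fun e => v ∈ e)).card = 1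

/-- The multigraph obtained from the cubic graph `G` by adding `m e` parallel copies of
each edge `e` is Class I with `c` colours; equivalently (since that multigraph is regular)
its edge multiset decomposes into `c` perfect matchings of `G`. -/
def ClassIPlus {V : Type*} (G : SimpleGraph V) (m : Sym2 V → ℕ) (c : ℕ) : Prop :=
  ∃ F : Fin c → Finset (Sym2 V), (∀ i, IsPM G (F i)) ∧
    ∀ e ∈ G.edgeSet, (Finset.univ.filter (fun i => e ∈ F i)).card = 1 + m e

/-- The set of `k` for which some `k` perfect matchings added to `G` give a Class I
multigraph. -/
def lSet {V : Type*} (G : SimpleGraph V) : Set ℕ :=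
  {k | ∃ M : Fin k → Finset (Sym2 V), (∀ i, IsPM G (M i)) ∧
    ClassIPlus G (fun e => (Finset.univ.filter (fun i => e ∈ M i)).card) (k + 3)}

/-- `l(G)`: the minimum number of perfect matchings to add to `G` to get a Class I
multigraph (`⊤` if impossible). -/
noncomputable def lVal {V : Type*} (G : SimpleGraph V) : ℕ∞ :=
  sInf ((fun k : ℕ => (k : ℕ∞)) '' lSet G)

/-- The perfect matching index (excessive index) of `G`. -/
noncomputable def pmIndex {V : Type*} (G : SimpleGraph V) : ℕ∞ :=
  sInf ((fun k : ℕ => (k : ℕ∞)) '' {k | ∃ F : Fin k → Finset (Sym2 V),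
    (∀ i, IsPM G (F i)) ∧ ∀ e ∈ G.edgeSet, ∃ i, e ∈ F i})

/-- `G` is cubic (3-regular). -/
def IsCubic {V : Type*} [Fintype V] (G : SimpleGraph V) : Prop := ∀ v, G.degree v = 3

/-- `G` is bridgeless. -/
def IsBridgeless {V : Type*} (G : SimpleGraph V) : Prop := ∀ e ∈ G.edgeSet, ¬ G.IsBridge e

/-- A 2-factor of `G`, given by its edge set: every vertex lies on exactly two edges. -/
def IsTwoFactor {V : Type*} (G : SimpleGraph V) (C : Finset (Sym2 V)) : Prop :=
  (∀ e ∈ C, e ∈ G.edgeSet) ∧ ∀ v : V, (C.filter (fun e => v ∈ e)).card = 2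

section helpers

lemma myFilterSdiff {α : Type*} [DecidableEq α] (s t : Finset α) (p : α → Prop)
    [DecidablePred p] : (s \ t).filter p = s.filter p \ t.filter p := by
  ext x; simp only [Finset.mem_filter, Finset.mem_sdiff]; tauto

lemma degFilter {V : Type*} [Fintype V] {G : SimpleGraph V} (hcub : IsCubic G) (v : V) :
    (G.edgeFinset.filter (fun e => v ∈ e)).card = 3 := by
  classical
  rw [← SimpleGraph.incidenceFinset_eq_filter, SimpleGraph.card_incidenceFinset_eq_degree,
    hcub]

lemma complFilterCard {V : Type*} [Fintype V] {G : SimpleGraph V} (hcub : IsCubic G)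
    {S : Finset (Sym2 V)} (hS : ∀ e ∈ S, e ∈ G.edgeSet) (v : V) :
    ((G.edgeFinset \ S).filter (fun e => v ∈ e)).card
      = 3 - (S.filter (fun e => v ∈ e)).card := by
  rw [myFilterSdiff, Finset.card_sdiff_of_subset
    (Finset.filter_subset_filter _ (fun e he => SimpleGraph.mem_edgeFinset.2 (hS e he))),
    degFilter hcub]

lemma pmCompl {V : Type*} [Fintype V] {G : SimpleGraph V} (hcub : IsCubic G)
    {M : Finset (Sym2 V)} (hM : IsPM G M) : IsTwoFactor G (G.edgeFinset \ M) :=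
  ⟨fun e he => SimpleGraph.mem_edgeFinset.1 (Finset.mem_sdiff.1 he).1,
   fun v => by rw [complFilterCard hcub hM.1, hM.2 v]⟩

lemma tfCompl {V : Type*} [Fintype V] {G : SimpleGraph V} (hcub : IsCubic G)
    {C : Finset (Sym2 V)} (hC : IsTwoFactor G C) : IsPM G (G.edgeFinset \ C) :=
  ⟨fun e he => SimpleGraph.mem_edgeFinset.1 (Finset.mem_sdiff.1 he).1,
   fun v => by rw [complFilterCard hcub hC.1, hC.2 v]⟩

lemma cardFilterEquiv {α β : Type*} [Fintype α] [Fintype β] (eqv : α ≃ β) (p : β → Prop)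
    [DecidablePred p] [DecidablePred fun a => p (eqv a)] :
    (Finset.univ.filter (fun a => p (eqv a))).card = (Finset.univ.filter p).card :=
  Finset.card_equiv eqv (by simp)

lemma cardFilterSum {α β : Type*} [Fintype α] [Fintype β] (p : α ⊕ β → Prop)
    [DecidablePred p] :
    ((Finset.univ : Finset (α ⊕ β)).filter p).card
      = (Finset.univ.filter (fun a => p (Sum.inl a))).card
        + (Finset.univ.filter (fun b => p (Sum.inr b))).card := by
  classical
  rw [← Fintype.card_subtype, ← Fintype.card_subtype, ← Fintype.card_subtype,
    ← Fintype.card_sum]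
  exact Fintype.card_congr Equiv.subtypeSum

end helpers

/-- For a bridgeless cubic graph `G` and `t ≥ 0`: there are `t` 2-factors of `G` whose
addition to `G` gives a Class I (`(2t+3)`-edge-colourable) multigraph iff the multigraph
`(t+1)G`, with every edge of `G` taken with multiplicity `t+1`, is Class I
(`(3t+3)`-edge-colourable). -/
theorem stmt19 {V : Type*} [Fintype V] (G : SimpleGraph V)
    (hcub : IsCubic G) (hbl : IsBridgeless G) (t : ℕ) :
    (∃ F : Fin t → Finset (Sym2 V), (∀ i, IsTwoFactor G (F i)) ∧
        ClassIPlus G (fun e => (Finset.univ.filter (fun i => e ∈ F i)).card) (2 * t + 3))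
      ↔ ClassIPlus G (fun _ => t) (3 * t + 3) := by
  classical
  have eqv : (Fin (2 * t + 3) ⊕ Fin t) ≃ Fin (3 * t + 3) :=
    finSumFinEquiv.trans (finCongr (by omega))
  constructor
  · rintro ⟨F, hF, N, hN, hcount⟩
    set M : Fin t → Finset (Sym2 V) := fun i => G.edgeFinset \ F i with hMdef
    have hM : ∀ i, IsPM G (M i) := fun i => tfCompl hcub (hF i)
    refine ⟨fun i => Sum.elim N M (eqv.symm i), ?_, ?_⟩
    · intro i
      rcases h : eqv.symm i with j | j
      · simpa [h] using hN j
      · simpa [h] using hM j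
    · intro e he
      have key : (Finset.univ.filter (fun i : Fin (3 * t + 3) =>
          e ∈ Sum.elim N M (eqv.symm i))).card
          = (Finset.univ.filter (fun x : Fin (2 * t + 3) ⊕ Fin t =>
              e ∈ Sum.elim N M x)).card := by
        rw [← cardFilterEquiv eqv (fun x => e ∈ Sum.elim N M (eqv.symm x))]
        simp
      rw [key, cardFilterSum]
      have h1 : (Finset.univ.filter (fun j : Fin (2 * t + 3) => e ∈ N j)).card
          = 1 + (Finset.univ.filter (fun i => e ∈ F i)).card := hcount e he
      have h2 : (Finset.univ.filter (fun j : Fin t => e ∈ M j))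
          = Finset.univ \ (Finset.univ.filter (fun j : Fin t => e ∈ F j)) := by
        ext j
        simp [hMdef, SimpleGraph.mem_edgeFinset, he]
      have h3 : (Finset.univ.filter (fun j : Fin t => e ∈ F j)).card ≤ t := by
        simpa using Finset.card_filter_le (Finset.univ : Finset (Fin t)) _
      simp only [Sum.elim_inl, Sum.elim_inr, h1, h2,
        Finset.card_sdiff_of_subset (Finset.filter_subset _ _), Finset.card_univ, Fintype.card_fin]
      convert (show (1 + (Finset.univ.filter (fun i => e ∈ F i)).card)
          + (t - (Finset.univ.filter (fun i => e ∈ F i)).card) = 1 + t by omega) using 2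
      · convert h1 using 2
        exact Finset.filter_congr_decidable _ _ _
      · convert congrArg Finset.card h2 using 1
        · exact congrArg Finset.card (Finset.filter_congr_decidable _ _ _)
        rw [Finset.card_sdiff_of_subset (Finset.filter_subset _ _), Finset.card_univ,
          Fintype.card_fin]
  · rintro ⟨N, hN, hcount⟩
    refine ⟨fun j => G.edgeFinset \ N (eqv (Sum.inr j)),
      fun j => pmCompl hcub (hN _), fun j => N (eqv (Sum.inl j)),
      fun j => hN _, ?_⟩
    intro e he
    have htot : (Finset.univ.filter (fun j : Fin (2 * t + 3) => e ∈ N (eqv (Sum.inl j)))).card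
        + (Finset.univ.filter (fun j : Fin t => e ∈ N (eqv (Sum.inr j)))).card = 1 + t := by
      rw [← cardFilterSum (fun x : Fin (2 * t + 3) ⊕ Fin t => e ∈ N (eqv x)),
        cardFilterEquiv eqv (fun i => e ∈ N i)]
      exact hcount e he
    have h2 : (Finset.univ.filter (fun j : Fin t => e ∈ G.edgeFinset \ N (eqv (Sum.inr j))))
        = Finset.univ \ (Finset.univ.filter (fun j : Fin t => e ∈ N (eqv (Sum.inr j)))) := by
      ext j
      simp [SimpleGraph.mem_edgeFinset, he]
    have h3 : (Finset.univ.filter (fun j : Fin t => e ∈ N (eqv (Sum.inr j)))).card ≤ t := by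
      simpa using Finset.card_filter_le (Finset.univ : Finset (Fin t)) _
    simp only [h2, Finset.card_sdiff_of_subset (Finset.filter_subset _ _), Finset.card_univ,
      Fintype.card_fin]
    omega
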